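/- Let W be an admissible word of Z(A) with base LpR, let θ be a rule of Z(A) applicable to W, and let t > 1 be a natural number. Then there is at most one reduced computation W →_θ W₁ → ⋯ → W_t of length t beginning with the application of θ in which all the words W, W₁, …, W_t have the same length. -/

import Mathlib

set_option maxHeartbeats 1000000

namespace SM

/-! ### Generic S-machine framework

Words are lists of (letter, sign) pairs; `true` is a positive occurrence.
An S-machine has state letters (`Q`) and tape letters (`Y`).  Each state
letter has a sector index on its left (`ls`) and on its right (`rs`);
sector `s` carries the tape alphabet `inY s`. -/

abbrev Wrd (Y : Type) := List (Y × Bool)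

def wInv {Y : Type} (w : Wrd Y) : Wrd Y := w.reverse.map fun x => (x.1, !x.2)

def IsReduced {Y : Type} (w : Wrd Y) : Prop :=
  List.Chain' (fun a b => ¬ (b.1 = a.1 ∧ b.2 = !a.2)) w

structure Machine (Q Y : Type) where
  ls : Q → ℕ
  rs : Q → ℕ
  inY : ℕ → Y → Prop

/-- A rule replaces each state letter `q` in its domain by a word `u q' v`
(`act q = some (u, q', v)`), and carries the subsets `Y_i(θ)` (`ys`). -/
structure Rule (Q Y : Type) where
  act : Q → Option (Wrd Y × Q × Wrd Y)
  ys : ℕ → Y → Prop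

/-- Sector to the right of an occurrence of a state letter. -/
def secR {Q Y : Type} (M : Machine Q Y) (x : Q × Bool) : ℕ :=
  if x.2 then M.rs x.1 else M.ls x.1

/-- Sector to the left of an occurrence of a state letter. -/
def secL {Q Y : Type} (M : Machine Q Y) (x : Q × Bool) : ℕ :=
  if x.2 then M.ls x.1 else M.rs x.1

def qd {Q : Type} [Inhabited Q] (l : List (Q × Bool)) (j : ℕ) : Q × Bool :=
  l.getD j (default, true)

/-- An admissible word: state-letter occurrences `qs` (the base) alternating
with reduced tape words `tapes`, with consistent sectors, each tape word
over the alphabet of its sector, and the whole word freely reduced. -/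
structure AdmWord {Q Y : Type} [Inhabited Q] (M : Machine Q Y) where
  qs : List (Q × Bool)
  tapes : List (Wrd Y)
  qs_ne : qs ≠ []
  hlen : tapes.length + 1 = qs.length
  consist : ∀ j, j + 1 < qs.length → secR M (qd qs j) = secL M (qd qs (j + 1))
  alph : ∀ j, j + 1 < qs.length → ∀ x ∈ tapes.getD j [], M.inY (secR M (qd qs j)) x.1
  tred : ∀ j, IsReduced (tapes.getD j [])
  qred : ∀ j, j + 1 < qs.length → (qd qs (j + 1)).1 = (qd qs j).1 →
      (qd qs (j + 1)).2 = !(qd qs j).2 → tapes.getD j [] ≠ []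

/-- `|W|_a` : the number of tape letters of `W`. -/
def alen {Q Y : Type} [Inhabited Q] {M : Machine Q Y} (W : AdmWord M) : ℕ :=
  (W.tapes.map List.length).sum

/-- `|W|` : the length of `W`. -/
def wlen {Q Y : Type} [Inhabited Q] {M : Machine Q Y} (W : AdmWord M) : ℕ :=
  W.qs.length + alen W

/-- Replacement of a single (signed) state-letter occurrence by a rule. -/
def occRepl {Q Y : Type} (r : Rule Q Y) : Q × Bool → Option (Wrd Y × (Q × Bool) × Wrd Y)
  | (q, true) => (r.act q).map fun x => (x.1, (x.2.1, true), x.2.2)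
  | (q, false) => (r.act q).map fun x => (wInv x.2.2, (x.2.1, false), wInv x.1)

/-- `Step M r W W'` : the rule `r` is applicable to `W` and `W' = r · W`. -/
def Step {Q Y : Type} [Inhabited Q] (M : Machine Q Y) (r : Rule Q Y)
    (W W' : AdmWord M) : Prop :=
  W.qs.length = W'.qs.length ∧
  (∀ j, j + 1 < W.qs.length → ∀ x ∈ W.tapes.getD j [], r.ys (secR M (qd W.qs j)) x.1) ∧
  (∀ j, j < W.qs.length → ∃ u v, occRepl r (qd W.qs j) = some (u, qd W'.qs j, v)) ∧
  (∀ j, j + 1 < W.qs.length → ∀ u v u' v',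
    occRepl r (qd W.qs j) = some (u, qd W'.qs j, v) →
    occRepl r (qd W.qs (j + 1)) = some (u', qd W'.qs (j + 1), v') →
    FreeGroup.mk (W'.tapes.getD j []) = FreeGroup.mk (v ++ W.tapes.getD j [] ++ u'))

/-! ### The machine `Z(A)`

State letters `L, p(1), p(2), p(3), R`; sector `0` is the `Lp`-sector with
alphabet `A₀ ∪ A₁`, sector `1` is the `pR`-sector with alphabet `A₀`.
A tape letter is a pair `(a, i)` with `i = false` for `a₀ ∈ A₀` and
`i = true` for `a₁ ∈ A₁`. -/

inductive ZQ
  | L | p1 | p2 | p3 | R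
deriving DecidableEq, Inhabited

abbrev ZY (A : Type) := A × Bool

def ZM (A : Type) : Machine ZQ (ZY A) where
  ls := fun q => match q with | .L => 9 | .R => 1 | _ => 0
  rs := fun q => match q with | .L => 0 | .R => 9 | _ => 1
  inY := fun s y => s = 0 ∨ (s = 1 ∧ y.2 = false)

inductive ZRulN (A : Type)
  | r1 (a : A) | r12 (a : A) | r2 (a : A) | r21 | r13 | r3 (a : A)
deriving DecidableEq

/-- A rule of `Z(A)`: a rule name together with an inversion flag. -/
abbrev ZRul (A : Type) := ZRulN A × Bool

def zinv (A : Type) : ZRul A → ZRul A := fun x => (x.1, !x.2)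

/-- Action of the positive rules of `Z(A)` on state letters. -/
def zactN (A : Type) : ZRulN A → ZQ → Option (Wrd (ZY A) × ZQ × Wrd (ZY A))
  | _, .L => some ([], .L, [])
  | _, .R => some ([], .R, [])
  | .r1 a, .p1 => some ([((a, true), false)], .p1, [((a, false), true)])
  | .r12 a, .p1 => some ([((a, false), false), ((a, true), true)], .p2, [])
  | .r2 a, .p2 => some ([((a, false), true)], .p2, [((a, false), false)])
  | .r21, .p2 => some ([], .p1, [])
  | .r13, .p1 => some ([], .p3, [])
  | .r3 a, .p3 => some ([((a, false), true)], .p3, [((a, false), false)])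
  | _, _ => none

/-- Action of the rules of `Z(A)` (including inverse rules). -/
def zact (A : Type) : ZRul A → ZQ → Option (Wrd (ZY A) × ZQ × Wrd (ZY A))
  | (n, false), q => zactN A n q
  | (_, true), .L => some ([], .L, [])
  | (_, true), .R => some ([], .R, [])
  | (.r1 a, true), .p1 => some ([((a, true), true)], .p1, [((a, false), false)])
  | (.r12 a, true), .p2 => some ([((a, true), false), ((a, false), true)], .p1, [])
  | (.r2 a, true), .p2 => some ([((a, false), false)], .p2, [((a, false), true)])
  | (.r21, true), .p1 => some ([], .p2, [])
  | (.r13, true), .p3 => some ([], .p1, [])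
  | (.r3 a, true), .p3 => some ([((a, false), false)], .p3, [((a, false), true)])
  | (_, true), _ => none

/-- The sets `Y_i(θ)` of the rules of `Z(A)`. -/
def zysN (A : Type) : ZRulN A → ℕ → ZY A → Prop
  | .r21, s, _ => s = 0
  | .r13, s, y => s = 1 ∧ y.2 = false
  | .r3 _, s, y => (s = 0 ∨ s = 1) ∧ y.2 = false
  | _, s, y => s = 0 ∨ (s = 1 ∧ y.2 = false)

def zys (A : Type) (r : ZRul A) : ℕ → ZY A → Prop := zysN A r.1

def zrule (A : Type) (r : ZRul A) : Rule ZQ (ZY A) := ⟨zact A r, zys A r⟩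

/-- A reduced computation of the machine `Z(A)`:
`W 0 →_{h 0} W 1 →_{h 1} ⋯ →_{h (t-1)} W t` with freely reduced history. -/
structure ZComp (A : Type) where
  t : ℕ
  W : ℕ → AdmWord (ZM A)
  h : ℕ → ZRul A
  steps : ∀ i, i < t → Step (ZM A) (zrule A (h i)) (W i) (W (i + 1))
  red : ∀ i, i + 1 < t → h (i + 1) ≠ zinv A (h i)

def isP (q : ZQ) : Prop := q = .p1 ∨ q = .p2 ∨ q = .p3

def baseLpR {A : Type} (W : AdmWord (ZM A)) : Prop :=
  ∃ p, isP p ∧ W.qs = [(ZQ.L, true), (p, true), (ZQ.R, true)]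

def baseIPR {A : Type} (W : AdmWord (ZM A)) : Prop :=
  ∃ p p', isP p ∧ isP p' ∧ W.qs = [(p, false), (p', true), (ZQ.R, true)]

/-- For a three-letter base ending with `R`: `W` contains the subword `st·R`. -/
def hasPR {A : Type} (W : AdmWord (ZM A)) (st : ZQ) : Prop :=
  qd W.qs 1 = (st, true) ∧ W.tapes.getD 1 [] = []

/-- All tape letters of `W` lie in `A₀^{±1}`. -/
def allA0 {A : Type} (W : AdmWord (ZM A)) : Prop :=
  ∀ j, ∀ x ∈ W.tapes.getD j [], x.1.2 = false

/-- `u` is a positive word over `A₀`. -/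
def Pos0 {A : Type} (u : Wrd (ZY A)) : Prop :=
  ∀ x ∈ u, x.2 = true ∧ x.1.2 = false

/-- Projection of a tape word onto `A` (sending `a₀, a₁` to `a`). -/
def projA {A : Type} (w : Wrd (ZY A)) : Wrd A := w.map fun x => (x.1.1, x.2)

section Aux
variable {α : Type}

def linv (c : α × Bool) : α × Bool := (c.1, !c.2)

@[simp] lemma linv_linv (c : α × Bool) : linv (linv c) = c := by
  cases c; simp [linv]

lemma pair_flip {a c : α × Bool} (h1 : c.1 = a.1) (h2 : c.2 = !a.2) : a = linv c := by
  obtain ⟨a1, a2⟩ := a; obtain ⟨c1, c2⟩ := c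
  simp only [linv] at *
  subst h1 h2
  simp

lemma isReduced_reduce_eq [DecidableEq α] {w : Wrd α} (h : IsReduced w) :
    FreeGroup.reduce w = w := by
  induction w with
  | nil => rfl
  | cons c w ih =>
    have hw : IsReduced w := h.tail
    rw [FreeGroup.reduce.cons, ih hw]
    cases w with
    | nil => rfl
    | cons d t =>
      have hcd : ¬ (d.1 = c.1 ∧ d.2 = !c.2) := (List.isChain_cons_cons.mp h).1
      have : ¬ (c.1 = d.1 ∧ c.2 = !d.2) := by
        rintro ⟨h1, h2⟩
        exact hcd ⟨h1.symm, by
          obtain ⟨c1, c2⟩ := c; obtain ⟨d1, d2⟩ := d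
          simp at h2 ⊢; cases d2 <;> simp_all⟩
      simp only [this, if_false]

lemma reduced_unique {w w' : Wrd α} (hw : IsReduced w) (hw' : IsReduced w')
    (h : FreeGroup.mk w = FreeGroup.mk w') : w = w' := by
  classical
  have := FreeGroup.reduce.sound h
  rwa [isReduced_reduce_eq hw, isReduced_reduce_eq hw'] at this

lemma mk_cancel (t rest : Wrd α) (c : α × Bool) :
    FreeGroup.mk (t ++ linv c :: c :: rest) = FreeGroup.mk (t ++ rest) := by
  have h : FreeGroup.Red.Step (t ++ (c.1, !c.2) :: (c.1, !(!c.2)) :: rest) (t ++ rest) :=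
    FreeGroup.Red.Step.not
  rw [Bool.not_not] at h
  exact Quot.sound h

lemma isReduced_concat2 {t : Wrd α} {a c : α × Bool} (h : IsReduced (t ++ [a]))
    (hac : a ≠ linv c) : IsReduced ((t ++ [a]) ++ [c]) := by
  refine List.isChain_append.mpr ⟨h, List.isChain_singleton _, ?_⟩
  intro p hp q hq
  have hp' : a = p := by simpa [List.getLast?_concat] using hp
  have hq' : c = q := by simpa using hq
  subst hp'; subst hq'
  rintro ⟨h1, h2⟩
  exact hac (pair_flip h1 h2)

lemma isReduced_cons2 {t : Wrd α} {b c : α × Bool} (h : IsReduced (b :: t))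
    (hbc : b ≠ linv c) : IsReduced (c :: b :: t) := by
  refine List.isChain_cons_cons.mpr ⟨?_, h⟩
  rintro ⟨h1, h2⟩
  exact hbc (by obtain ⟨b1, b2⟩ := b; obtain ⟨c1, c2⟩ := c; simp_all [linv])

lemma append_case {x x1 : Wrd α} {c : α × Bool} (hx : IsReduced x) (hx1 : IsReduced x1)
    (h : FreeGroup.mk x1 = FreeGroup.mk (x ++ [c])) :
    (∃ t, x = t ++ [linv c] ∧ x1 = t) ∨ x1 = x ++ [c] := by
  rcases List.eq_nil_or_concat x with rfl | ⟨t, a, rfl⟩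
  · right
    exact reduced_unique hx1 (List.isChain_singleton _) (by simpa using h)
  · simp only [List.concat_eq_append] at hx h ⊢
    by_cases hac : a = linv c
    · subst hac
      left
      have ht : IsReduced t := (List.isChain_append.mp hx).1
      refine ⟨t, rfl, reduced_unique hx1 ht (h.trans ?_)⟩
      have := mk_cancel t [] c
      simpa using this
    · right
      exact reduced_unique hx1 (isReduced_concat2 hx hac) h

lemma cons_case {y y1 : Wrd α} {c : α × Bool} (hy : IsReduced y) (hy1 : IsReduced y1)
    (h : FreeGroup.mk y1 = FreeGroup.mk (c :: y)) :
    (∃ t, y = linv c :: t ∧ y1 = t) ∨ y1 = c :: y := by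
  rcases y with _ | ⟨b, t⟩
  · right
    exact reduced_unique hy1 (List.isChain_singleton _) h
  · by_cases hbc : b = linv c
    · subst hbc
      left
      refine ⟨t, rfl, reduced_unique hy1 hy.tail (h.trans ?_)⟩
      have := mk_cancel ([] : Wrd α) t (linv c)
      simpa using this
    · right
      exact reduced_unique hy1 (isReduced_cons2 hy hbc) h

end Aux

section Rules
variable {A : Type}

lemma s_rule {x y x1 y1 : Wrd (ZY A)} {cu cv : ZY A × Bool}
    (hx : IsReduced x) (hy : IsReduced y) (hx1 : IsReduced x1) (hy1 : IsReduced y1)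
    (ex : FreeGroup.mk x1 = FreeGroup.mk (x ++ [cu]))
    (ey : FreeGroup.mk y1 = FreeGroup.mk (cv :: y))
    (hlen : x1.length + y1.length = x.length + y.length) :
    (x = x1 ++ [linv cu] ∧ y1 = cv :: y) ∨ (y = linv cv :: y1 ∧ x1 = x ++ [cu]) := by
  rcases append_case hx hx1 ex with ⟨t, hxt, rfl⟩ | rfl <;>
    rcases cons_case hy hy1 ey with ⟨s, hys, rfl⟩ | rfl
  · exfalso
    rw [hxt, hys] at hlen
    simp at hlen
    omega
  · exact Or.inl ⟨by rw [hxt], rfl⟩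
  · exact Or.inr ⟨by rw [hys], rfl⟩
  · exfalso
    simp at hlen
    omega

lemma d_rule {x x1 : Wrd (ZY A)} {c d : ZY A × Bool}
    (hx : IsReduced x) (hx1 : IsReduced x1) (hcd : d ≠ linv c)
    (ex : FreeGroup.mk x1 = FreeGroup.mk (x ++ [c, d]))
    (hlen : x1.length = x.length) :
    ∃ t, x = t ++ [linv c] ∧ x1 = t ++ [d] := by
  rcases List.eq_nil_or_concat x with rfl | ⟨t, a, rfl⟩
  · exfalso
    have : x1 = [c, d] := by
      refine reduced_unique hx1 ?_ (by simpa using ex)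
      exact List.isChain_pair.mpr (by
        rintro ⟨h1, h2⟩
        exact hcd (by obtain ⟨d1, d2⟩ := d; obtain ⟨c1, c2⟩ := c; simp_all [linv]))
    rw [this] at hlen; simp at hlen
  · simp only [List.concat_eq_append] at hx ex hlen ⊢
    by_cases hac : a = linv c
    · subst hac
      have ht : IsReduced t := (List.isChain_append.mp hx).1
      have ex' : FreeGroup.mk x1 = FreeGroup.mk (t ++ [d]) := by
        refine ex.trans ?_
        have := mk_cancel t [d] c
        simpa using this
      rcases append_case ht hx1 ex' with ⟨s, hts, rfl⟩ | rfl
      · exfalso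
        rw [hts] at hlen
        simp at hlen
      · exact ⟨t, rfl, rfl⟩
    · exfalso
      have hred : IsReduced ((t ++ [a]) ++ [c] ++ [d]) := by
        refine isReduced_concat2 (isReduced_concat2 hx hac) ?_
        rintro rfl; exact hcd (by simp)
      have : x1 = t ++ [a] ++ [c] ++ [d] := by
        refine reduced_unique hx1 hred (ex.trans ?_)
        simp
      rw [this] at hlen; simp at hlen

def uRead : ZQ → (ZY A × Bool) → Option (ZRul A)
  | .p1, ((a, true), true) => some (.r1 a, false)
  | .p1, ((a, true), false) => some (.r1 a, true)
  | .p1, ((a, false), true) => some (.r12 a, false)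
  | .p2, ((a, false), false) => some (.r2 a, false)
  | .p2, ((a, false), true) => some (.r2 a, true)
  | .p2, ((a, true), true) => some (.r12 a, true)
  | .p3, ((a, false), false) => some (.r3 a, false)
  | .p3, ((a, false), true) => some (.r3 a, true)
  | _, _ => none

def vRead : ZQ → (ZY A × Bool) → Option (ZRul A)
  | .p1, ((a, false), false) => some (.r1 a, false)
  | .p1, ((a, false), true) => some (.r1 a, true)
  | .p2, ((a, false), true) => some (.r2 a, false)
  | .p2, ((a, false), false) => some (.r2 a, true)
  | .p3, ((a, false), true) => some (.r3 a, false)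
  | .p3, ((a, false), false) => some (.r3 a, true)
  | _, _ => none

def Noop1 (σ : ZRul A) (p : ZQ) : Prop :=
  (σ = (.r21, false) ∧ p = .p2) ∨ (σ = (.r21, true) ∧ p = .p1)

def Noop2 (σ : ZRul A) (p : ZQ) : Prop :=
  (σ = (.r13, false) ∧ p = .p1) ∨ (σ = (.r13, true) ∧ p = .p3)

def Cand (σ : ZRul A) (p : ZQ) (x y : Wrd (ZY A)) : Prop :=
  (∃ ℓ t, x = t ++ [ℓ] ∧ uRead p ℓ = some σ) ∨
  (∃ ℓ t, y = ℓ :: t ∧ vRead p ℓ = some σ) ∨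
  (Noop1 σ p ∧ y = []) ∨ (Noop2 σ p ∧ x = [])

def Shape (θ : ZRul A) (p : ZQ) (x y : Wrd (ZY A)) (p' : ZQ) (x1 y1 : Wrd (ZY A)) : Prop :=
  (∃ ℓ ℓ', x = x1 ++ [ℓ] ∧ y1 = ℓ' :: y ∧ uRead p ℓ = some θ ∧ vRead p' ℓ' = some (zinv A θ)) ∨
  (∃ ℓ ℓ', y = ℓ :: y1 ∧ x1 = x ++ [ℓ'] ∧ vRead p ℓ = some θ ∧ uRead p' ℓ' = some (zinv A θ)) ∨
  (∃ ℓ ℓ' t, x = t ++ [ℓ] ∧ x1 = t ++ [ℓ'] ∧ y1 = y ∧ uRead p ℓ = some θ ∧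
    uRead p' ℓ' = some (zinv A θ)) ∨
  (x1 = x ∧ y1 = y ∧
    ((Noop1 θ p ∧ Noop1 (zinv A θ) p' ∧ y = []) ∨ (Noop2 θ p ∧ Noop2 (zinv A θ) p' ∧ x = [])))

lemma shape_src {θ : ZRul A} {p p' : ZQ} {x y x1 y1 : Wrd (ZY A)}
    (h : Shape θ p x y p' x1 y1) : Cand θ p x y := by
  rcases h with ⟨ℓ, ℓ', h1, h2, h3, h4⟩ | ⟨ℓ, ℓ', h1, h2, h3, h4⟩ |
    ⟨ℓ, ℓ', t, h1, h2, h3, h4, h5⟩ | ⟨h1, h2, ⟨hn, _, he⟩ | ⟨hn, _, he⟩⟩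
  · exact Or.inl ⟨ℓ, x1, h1, h3⟩
  · exact Or.inr (Or.inl ⟨ℓ, y1, h1, h3⟩)
  · exact Or.inl ⟨ℓ, t, h1, h4⟩
  · exact Or.inr (Or.inr (Or.inl ⟨hn, he⟩))
  · exact Or.inr (Or.inr (Or.inr ⟨hn, he⟩))

lemma shape_tgt {θ : ZRul A} {p p' : ZQ} {x y x1 y1 : Wrd (ZY A)}
    (h : Shape θ p x y p' x1 y1) : Cand (zinv A θ) p' x1 y1 := by
  rcases h with ⟨ℓ, ℓ', h1, h2, h3, h4⟩ | ⟨ℓ, ℓ', h1, h2, h3, h4⟩ |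
    ⟨ℓ, ℓ', t, h1, h2, h3, h4, h5⟩ | ⟨h1, h2, ⟨_, hn, he⟩ | ⟨_, hn, he⟩⟩
  · exact Or.inr (Or.inl ⟨ℓ', y, h2, h4⟩)
  · exact Or.inl ⟨ℓ', x, h2, h4⟩
  · exact Or.inl ⟨ℓ', t, h2, h5⟩
  · exact Or.inr (Or.inr (Or.inl ⟨hn, h2 ▸ he⟩))
  · exact Or.inr (Or.inr (Or.inr ⟨hn, h1 ▸ he⟩))

lemma last_eq {x t1 t2 : Wrd (ZY A)} {ℓ1 ℓ2 : ZY A × Bool}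
    (h1 : x = t1 ++ [ℓ1]) (h2 : x = t2 ++ [ℓ2]) : ℓ1 = ℓ2 := by
  have := congrArg List.getLast? (h1.symm.trans h2)
  simpa [List.getLast?_concat] using this

lemma noop1_det {σ1 σ2 : ZRul A} {p : ZQ} (h1 : Noop1 σ1 p) (h2 : Noop1 σ2 p) : σ1 = σ2 := by
  rcases h1 with ⟨rfl, rfl⟩ | ⟨rfl, rfl⟩ <;> rcases h2 with ⟨rfl, h⟩ | ⟨rfl, h⟩ <;> simp_all

lemma noop2_det {σ1 σ2 : ZRul A} {p : ZQ} (h1 : Noop2 σ1 p) (h2 : Noop2 σ2 p) : σ1 = σ2 := by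
  rcases h1 with ⟨rfl, rfl⟩ | ⟨rfl, rfl⟩ <;> rcases h2 with ⟨rfl, h⟩ | ⟨rfl, h⟩ <;> simp_all

lemma cand_unique {σ0 σ1 σ2 : ZRul A} {p : ZQ} {x y : Wrd (ZY A)}
    (h0 : Cand σ0 p x y) (h1 : Cand σ1 p x y) (h2 : Cand σ2 p x y)
    (n1 : σ1 ≠ σ0) (n2 : σ2 ≠ σ0) : σ1 = σ2 := by
  rcases h1 with ⟨ℓ1, t1, e1, r1⟩ | ⟨ℓ1, t1, e1, r1⟩ | ⟨m1, e1⟩ | ⟨m1, e1⟩ <;>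
    rcases h2 with ⟨ℓ2, t2, e2, r2⟩ | ⟨ℓ2, t2, e2, r2⟩ | ⟨m2, e2⟩ | ⟨m2, e2⟩
  -- 1,1 : both u-readers
  · obtain rfl := last_eq e1 e2
    exact Option.some.inj (r1.symm.trans r2)
  -- 1,2 : u-reader vs v-reader
  · exfalso
    rcases h0 with ⟨ℓ0, t0, e0, r0⟩ | ⟨ℓ0, t0, e0, r0⟩ | ⟨m0, e0⟩ | ⟨m0, e0⟩
    · obtain rfl := last_eq e1 e0
      rw [r1] at r0; exact n1 (Option.some.inj r0)
    · rw [e2] at e0; injection e0 with eh _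
      subst eh
      rw [r2] at r0
      exact n2 (Option.some.inj r0)
    · rw [e0] at e2; simp at e2
    · rw [e0] at e1; simp at e1
  -- 1,3 : u-reader vs Noop1  (y = [])
  · exfalso
    rcases h0 with ⟨ℓ0, t0, e0, r0⟩ | ⟨ℓ0, t0, e0, r0⟩ | ⟨m0, e0⟩ | ⟨m0, e0⟩
    · obtain rfl := last_eq e1 e0
      rw [r1] at r0
      exact n1 (Option.some.inj r0)
    · rw [e2] at e0; simp at e0
    · exact n2 (noop1_det m2 m0)
    · rw [e0] at e1; simp at e1
  -- 1,4 : u-reader vs Noop2 (x = [])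
  · exfalso; rw [e2] at e1; simp at e1
  -- 2,1 : symmetric of 1,2
  · exfalso
    rcases h0 with ⟨ℓ0, t0, e0, r0⟩ | ⟨ℓ0, t0, e0, r0⟩ | ⟨m0, e0⟩ | ⟨m0, e0⟩
    · obtain rfl := last_eq e2 e0
      rw [r2] at r0
      exact n2 (Option.some.inj r0)
    · rw [e1] at e0; injection e0 with eh _
      subst eh
      rw [r1] at r0
      exact n1 (Option.some.inj r0)
    · rw [e0] at e1; simp at e1
    · rw [e0] at e2; simp at e2
  -- 2,2 : both v-readers
  · rw [e1] at e2; injection e2 with eh _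
    subst eh
    exact Option.some.inj (r1.symm.trans r2)
  -- 2,3 : v-reader vs Noop1 (y=[])
  · exfalso; rw [e2] at e1; simp at e1
  -- 2,4 : v-reader vs Noop2 (x=[])
  · exfalso
    rcases h0 with ⟨ℓ0, t0, e0, r0⟩ | ⟨ℓ0, t0, e0, r0⟩ | ⟨m0, e0⟩ | ⟨m0, e0⟩
    · rw [e2] at e0; simp at e0
    · rw [e1] at e0; injection e0 with eh _
      subst eh
      rw [r1] at r0
      exact n1 (Option.some.inj r0)
    · rw [e0] at e1; simp at e1
    · exact n2 (noop2_det m2 m0)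
  -- 3,1 : Noop1 vs u-reader
  · exfalso
    rcases h0 with ⟨ℓ0, t0, e0, r0⟩ | ⟨ℓ0, t0, e0, r0⟩ | ⟨m0, e0⟩ | ⟨m0, e0⟩
    · obtain rfl := last_eq e2 e0
      rw [r2] at r0
      exact n2 (Option.some.inj r0)
    · rw [e1] at e0; simp at e0
    · exact n1 (noop1_det m1 m0)
    · rw [e0] at e2; simp at e2
  -- 3,2 : Noop1 vs v-reader
  · exfalso; rw [e1] at e2; simp at e2
  -- 3,3 : both Noop1
  · exact noop1_det m1 m2
  -- 3,4 : Noop1 vs Noop2 (y=[], x=[])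
  · exfalso
    rcases h0 with ⟨ℓ0, t0, e0, r0⟩ | ⟨ℓ0, t0, e0, r0⟩ | ⟨m0, e0⟩ | ⟨m0, e0⟩
    · rw [e2] at e0; simp at e0
    · rw [e1] at e0; simp at e0
    · exact n1 (noop1_det m1 m0)
    · exact n2 (noop2_det m2 m0)
  -- 4,1 : Noop2 vs u-reader
  · exfalso; rw [e1] at e2; simp at e2
  -- 4,2 : Noop2 vs v-reader
  · exfalso
    rcases h0 with ⟨ℓ0, t0, e0, r0⟩ | ⟨ℓ0, t0, e0, r0⟩ | ⟨m0, e0⟩ | ⟨m0, e0⟩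
    · rw [e1] at e0; simp at e0
    · rw [e2] at e0; injection e0 with eh _
      subst eh
      rw [r2] at r0
      exact n2 (Option.some.inj r0)
    · rw [e0] at e2; simp at e2
    · exact n1 (noop2_det m1 m0)
  -- 4,3 : Noop2 vs Noop1
  · exfalso
    rcases h0 with ⟨ℓ0, t0, e0, r0⟩ | ⟨ℓ0, t0, e0, r0⟩ | ⟨m0, e0⟩ | ⟨m0, e0⟩
    · rw [e1] at e0; simp at e0
    · rw [e2] at e0; simp at e0
    · exact n2 (noop1_det m2 m0)
    · exact n1 (noop2_det m1 m0)
  -- 4,4 : both Noop2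
  · exact noop2_det m1 m2

end Rules

section ShapeStep
variable {A : Type}

lemma empty_of_r21 {n : ZRulN A} {b : Bool} {y : Wrd (ZY A)} (hn : n = .r21)
    (hysy : ∀ ℓ ∈ y, zys A (n, b) 1 ℓ.1) : y = [] := by
  rcases y with _ | ⟨ℓ, s⟩
  · rfl
  · have := hysy ℓ (by simp)
    rw [hn] at this
    simp [zys, zysN] at this

lemma empty_of_r13 {n : ZRulN A} {b : Bool} {x : Wrd (ZY A)} (hn : n = .r13)
    (hysx : ∀ ℓ ∈ x, zys A (n, b) 0 ℓ.1) : x = [] := by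
  rcases x with _ | ⟨ℓ, s⟩
  · rfl
  · have := hysx ℓ (by simp)
    rw [hn] at this
    simp [zys, zysN] at this

lemma shape_of_step {θ : ZRul A} {p p' : ZQ} {u v : Wrd (ZY A)} {x y x1 y1 : Wrd (ZY A)}
    (hp : isP p) (hact : zact A θ p = some (u, p', v))
    (hx : IsReduced x) (hy : IsReduced y) (hx1 : IsReduced x1) (hy1 : IsReduced y1)
    (ex : FreeGroup.mk x1 = FreeGroup.mk (x ++ u)) (ey : FreeGroup.mk y1 = FreeGroup.mk (v ++ y))
    (hysx : ∀ ℓ ∈ x, zys A θ 0 ℓ.1) (hysy : ∀ ℓ ∈ y, zys A θ 1 ℓ.1)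
    (hlen : x1.length + y1.length = x.length + y.length) :
    Shape θ p x y p' x1 y1 := by
  obtain ⟨n, b⟩ := θ
  rcases hp with rfl | rfl | rfl <;> cases b <;> cases n <;>
    simp [zact, zactN] at hact <;> obtain ⟨rfl, rfl, rfl⟩ := hact
  case inl.false.r1 =>
      rw [List.singleton_append] at ey
      rcases s_rule hx hy hx1 hy1 ex ey hlen with ⟨h1, h2⟩ | ⟨h1, h2⟩
      · exact Or.inl ⟨_, _, h1, h2, rfl, rfl⟩
      · exact Or.inr (Or.inl ⟨_, _, h1, h2, rfl, rfl⟩)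
  case inl.false.r12 =>
      have hy1y : y1 = y := reduced_unique hy1 hy (by simpa using ey)
      subst hy1y
      have hlen' : x1.length = x.length := by omega
      obtain ⟨t, h1, h2⟩ := d_rule hx hx1 (by simp [linv]) ex hlen'
      exact Or.inr (Or.inr (Or.inl ⟨_, _, t, h1, h2, rfl, rfl, rfl⟩))
  case inl.false.r13 =>
      have hx1x : x1 = x := reduced_unique hx1 hx (by simpa using ex)
      have hy1y : y1 = y := reduced_unique hy1 hy (by simpa using ey)
      exact Or.inr (Or.inr (Or.inr ⟨hx1x, hy1y,
        Or.inr ⟨Or.inl ⟨rfl, rfl⟩, Or.inr ⟨rfl, rfl⟩, empty_of_r13 rfl hysx⟩⟩))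
  case inl.true.r1 =>
      rw [List.singleton_append] at ey
      rcases s_rule hx hy hx1 hy1 ex ey hlen with ⟨h1, h2⟩ | ⟨h1, h2⟩
      · exact Or.inl ⟨_, _, h1, h2, rfl, rfl⟩
      · exact Or.inr (Or.inl ⟨_, _, h1, h2, rfl, rfl⟩)
  case inl.true.r21 =>
      have hx1x : x1 = x := reduced_unique hx1 hx (by simpa using ex)
      have hy1y : y1 = y := reduced_unique hy1 hy (by simpa using ey)
      exact Or.inr (Or.inr (Or.inr ⟨hx1x, hy1y,
        Or.inl ⟨Or.inr ⟨rfl, rfl⟩, Or.inl ⟨rfl, rfl⟩, empty_of_r21 rfl hysy⟩⟩))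
  case inr.inl.false.r2 =>
      rw [List.singleton_append] at ey
      rcases s_rule hx hy hx1 hy1 ex ey hlen with ⟨h1, h2⟩ | ⟨h1, h2⟩
      · exact Or.inl ⟨_, _, h1, h2, rfl, rfl⟩
      · exact Or.inr (Or.inl ⟨_, _, h1, h2, rfl, rfl⟩)
  case inr.inl.false.r21 =>
      have hx1x : x1 = x := reduced_unique hx1 hx (by simpa using ex)
      have hy1y : y1 = y := reduced_unique hy1 hy (by simpa using ey)
      exact Or.inr (Or.inr (Or.inr ⟨hx1x, hy1y,
        Or.inl ⟨Or.inl ⟨rfl, rfl⟩, Or.inr ⟨rfl, rfl⟩, empty_of_r21 rfl hysy⟩⟩))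
  case inr.inl.true.r2 =>
      rw [List.singleton_append] at ey
      rcases s_rule hx hy hx1 hy1 ex ey hlen with ⟨h1, h2⟩ | ⟨h1, h2⟩
      · exact Or.inl ⟨_, _, h1, h2, rfl, rfl⟩
      · exact Or.inr (Or.inl ⟨_, _, h1, h2, rfl, rfl⟩)
  case inr.inl.true.r12 =>
      have hy1y : y1 = y := reduced_unique hy1 hy (by simpa using ey)
      subst hy1y
      have hlen' : x1.length = x.length := by omega
      obtain ⟨t, h1, h2⟩ := d_rule hx hx1 (by simp [linv]) ex hlen'
      exact Or.inr (Or.inr (Or.inl ⟨_, _, t, h1, h2, rfl, rfl, rfl⟩))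
  case inr.inr.false.r3 =>
      rw [List.singleton_append] at ey
      rcases s_rule hx hy hx1 hy1 ex ey hlen with ⟨h1, h2⟩ | ⟨h1, h2⟩
      · exact Or.inl ⟨_, _, h1, h2, rfl, rfl⟩
      · exact Or.inr (Or.inl ⟨_, _, h1, h2, rfl, rfl⟩)
  case inr.inr.true.r3 =>
      rw [List.singleton_append] at ey
      rcases s_rule hx hy hx1 hy1 ex ey hlen with ⟨h1, h2⟩ | ⟨h1, h2⟩
      · exact Or.inl ⟨_, _, h1, h2, rfl, rfl⟩
      · exact Or.inr (Or.inl ⟨_, _, h1, h2, rfl, rfl⟩)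
  case inr.inr.true.r13 =>
      have hx1x : x1 = x := reduced_unique hx1 hx (by simpa using ex)
      have hy1y : y1 = y := reduced_unique hy1 hy (by simpa using ey)
      exact Or.inr (Or.inr (Or.inr ⟨hx1x, hy1y,
        Or.inr ⟨Or.inr ⟨rfl, rfl⟩, Or.inl ⟨rfl, rfl⟩, empty_of_r13 rfl hysx⟩⟩))

end ShapeStep

section Extract
variable {A : Type}

lemma zact_L (θ : ZRul A) : zact A θ .L = some ([], .L, []) := by
  obtain ⟨n, b⟩ := θ; cases b <;> cases n <;> rfl

lemma zact_R (θ : ZRul A) : zact A θ .R = some ([], .R, []) := by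
  obtain ⟨n, b⟩ := θ; cases b <;> cases n <;> rfl

lemma zact_isP {θ : ZRul A} {p p' : ZQ} {u v : Wrd (ZY A)}
    (hp : isP p) (h : zact A θ p = some (u, p', v)) : isP p' := by
  obtain ⟨n, b⟩ := θ
  rcases hp with rfl | rfl | rfl <;> cases b <;> cases n <;>
    simp [zact, zactN, isP] at h ⊢ <;> simp [h.2.1]

lemma list_two {l : List (Wrd (ZY A))} (h : l.length = 2) :
    ∃ x y, l = [x, y] := by
  rcases l with _ | ⟨x, _ | ⟨y, _ | _⟩⟩ <;> simp_all

lemma list_three {Q : Type} [Inhabited Q] {l : List (Q × Bool)} (h : l.length = 3) :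
    l = [qd l 0, qd l 1, qd l 2] := by
  rcases l with _ | ⟨x, _ | ⟨y, _ | ⟨z, _ | _⟩⟩⟩ <;> simp_all [qd]

lemma extract {θ : ZRul A} {W W' : AdmWord (ZM A)} {p : ZQ} (hp : isP p)
    (hWq : W.qs = [(.L, true), (p, true), (.R, true)])
    (hs : Step (ZM A) (zrule A θ) W W') :
    ∃ p' u v x y x1 y1, isP p' ∧ W'.qs = [(.L, true), (p', true), (.R, true)] ∧
      W.tapes = [x, y] ∧ W'.tapes = [x1, y1] ∧ zact A θ p = some (u, p', v) ∧
      FreeGroup.mk x1 = FreeGroup.mk (x ++ u) ∧ FreeGroup.mk y1 = FreeGroup.mk (v ++ y) ∧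
      (∀ ℓ ∈ x, zys A θ 0 ℓ.1) ∧ (∀ ℓ ∈ y, zys A θ 1 ℓ.1) := by
  obtain ⟨hql, hys, hocc, htape⟩ := hs
  have hW3 : W.qs.length = 3 := by rw [hWq]; rfl
  have hW'3 : W'.qs.length = 3 := by omega
  obtain ⟨x, y, htW⟩ := list_two (show W.tapes.length = 2 by have := W.hlen; omega)
  obtain ⟨x1, y1, htW'⟩ := list_two (show W'.tapes.length = 2 by have := W'.hlen; omega)
  have gx0 : W.tapes.getD 0 [] = x := by rw [htW]; rfl
  have gx1 : W.tapes.getD 1 [] = y := by rw [htW]; rfl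
  have gx0' : W'.tapes.getD 0 [] = x1 := by rw [htW']; rfl
  have gx1' : W'.tapes.getD 1 [] = y1 := by rw [htW']; rfl
  have hq0 : qd W.qs 0 = (.L, true) := by simp [qd, hWq]
  have hq1 : qd W.qs 1 = (p, true) := by simp [qd, hWq]
  have hq2 : qd W.qs 2 = (.R, true) := by simp [qd, hWq]
  obtain ⟨u0, v0, h0⟩ := hocc 0 (by omega)
  obtain ⟨u1, v1, h1⟩ := hocc 1 (by omega)
  obtain ⟨u2, v2, h2⟩ := hocc 2 (by omega)
  rw [hq0] at h0; rw [hq1] at h1; rw [hq2] at h2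
  have e0 : occRepl (zrule A θ) (ZQ.L, true) = some ([], (ZQ.L, true), []) := by
    simp [occRepl, zrule, zact_L]
  have e2 : occRepl (zrule A θ) (ZQ.R, true) = some ([], (ZQ.R, true), []) := by
    simp [occRepl, zrule, zact_R]
  have hW'0 : qd W'.qs 0 = (ZQ.L, true) := by
    rw [e0] at h0
    injection h0 with h0
    injection h0 with _ h0
    injection h0 with h0 _
    exact h0.symm
  have hW'2 : qd W'.qs 2 = (ZQ.R, true) := by
    rw [e2] at h2
    injection h2 with h2
    injection h2 with _ h2
    injection h2 with h2 _
    exact h2.symm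
  rcases ha : zact A θ p with - | ⟨uu, pp, vv⟩
  · rw [show occRepl (zrule A θ) (p, true) = (zact A θ p).map
        (fun z => (z.1, (z.2.1, true), z.2.2)) from rfl, ha] at h1
    simp at h1
  · have h1' : occRepl (zrule A θ) (p, true) = some (uu, (pp, true), vv) := by
      rw [show occRepl (zrule A θ) (p, true) = (zact A θ p).map
        (fun z => (z.1, (z.2.1, true), z.2.2)) from rfl, ha]
      rfl
    have hW'1 : qd W'.qs 1 = (pp, true) := by
      rw [h1'] at h1
      injection h1 with h1
      injection h1 with _ h1
      injection h1 with h1 _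
      exact h1.symm
    have hq' : W'.qs = [(.L, true), (pp, true), (.R, true)] := by
      rw [list_three hW'3, hW'0, hW'1, hW'2]
    have ht0 := htape 0 (by omega) [] [] uu vv
      (by rw [hq0, e0, hW'0]) (by rw [hq1, h1', hW'1])
    have ht1 := htape 1 (by omega) uu vv [] []
      (by rw [hq1, h1', hW'1]) (by rw [hq2, e2, hW'2])
    rw [gx0', gx0] at ht0
    rw [gx1', gx1] at ht1
    have hsx := hys 0 (by omega)
    have hsy := hys 1 (by omega)
    rw [hq0] at hsx; rw [hq1] at hsy; rw [gx0] at hsx; rw [gx1] at hsy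
    have hsec0 : secR (ZM A) (ZQ.L, true) = 0 := rfl
    have hsec1 : secR (ZM A) (p, true) = 1 := by
      rcases hp with rfl | rfl | rfl <;> rfl
    rw [hsec0] at hsx
    rw [hsec1] at hsy
    refine ⟨pp, uu, vv, x, y, x1, y1, zact_isP hp ha, hq', htW, htW', rfl, ?_, ?_, ?_, ?_⟩
    · simpa using ht0
    · simpa using ht1
    · exact fun ℓ hℓ => hsx ℓ hℓ
    · exact fun ℓ hℓ => hsy ℓ hℓ

lemma adm_ext {Q Y : Type} [Inhabited Q] {M : Machine Q Y} {W W' : AdmWord M}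
    (h1 : W.qs = W'.qs) (h2 : W.tapes = W'.tapes) : W = W' := by
  cases W; cases W'
  dsimp at h1 h2
  subst h1; subst h2
  rfl

lemma step_det {θ : ZRul A} {W W1 W2 : AdmWord (ZM A)} {p : ZQ} (hp : isP p)
    (hWq : W.qs = [(.L, true), (p, true), (.R, true)])
    (h1 : Step (ZM A) (zrule A θ) W W1) (h2 : Step (ZM A) (zrule A θ) W W2) : W1 = W2 := by
  obtain ⟨p', u, v, x, y, x1, y1, hP, hq1, htW, ht1, hact, e1x, e1y, -, -⟩ := extract hp hWq h1
  obtain ⟨p'', u', v', x', y', x2, y2, hP2, hq2, htW2, ht2, hact2, e2x, e2y, -, -⟩ :=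
    extract hp hWq h2
  obtain ⟨rfl, rfl⟩ : x = x' ∧ y = y' := by rw [htW] at htW2; simp_all
  obtain ⟨rfl, rfl, rfl⟩ : u' = u ∧ p'' = p' ∧ v' = v := by rw [hact] at hact2; simp_all
  have hr1x : IsReduced x1 := by have := W1.tred 0; rwa [ht1] at this
  have hr1y : IsReduced y1 := by have := W1.tred 1; rwa [ht1] at this
  have hr2x : IsReduced x2 := by have := W2.tred 0; rwa [ht2] at this
  have hr2y : IsReduced y2 := by have := W2.tred 1; rwa [ht2] at this
  have hx : x1 = x2 := reduced_unique hr1x hr2x (e1x.trans e2x.symm)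
  have hy : y1 = y2 := reduced_unique hr1y hr2y (e1y.trans e2y.symm)
  exact adm_ext (hq1.trans hq2.symm) (by rw [ht1, ht2, hx, hy])

lemma wlen_eq {W : AdmWord (ZM A)} {x y : Wrd (ZY A)} {p : ZQ}
    (hq : W.qs = [(.L, true), (p, true), (.R, true)]) (ht : W.tapes = [x, y]) :
    wlen W = 3 + (x.length + y.length) := by
  simp [wlen, alen, hq, ht]

end Extract

lemma tred_pair {A : Type} {W : AdmWord (ZM A)} {x y : Wrd (ZY A)} (h : W.tapes = [x, y]) :
    IsReduced x ∧ IsReduced y := by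
  constructor
  · have := W.tred 0; rw [h] at this; simpa using this
  · have := W.tred 1; rw [h] at this; simpa using this

/-- Lemma 2.6.  For `W` with base `LpR`, a rule `θ`
applicable to `W` and `t > 1`, there is at most one reduced computation of
length `t` starting at `W` with the rule `θ` in which all words have the
same length. -/
theorem statement_6 (A : Type) (t : ℕ) (ht : 1 < t) (θ : ZRul A)
    (c c' : ZComp A) (hct : c.t = t) (hct' : c'.t = t)
    (hb : baseLpR (c.W 0)) (h0 : c.W 0 = c'.W 0)
    (hr : c.h 0 = θ) (hr' : c'.h 0 = θ)
    (hconst : ∀ i ≤ t, wlen (c.W i) = wlen (c.W 0))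
    (hconst' : ∀ i ≤ t, wlen (c'.W i) = wlen (c'.W 0)) :
    (∀ i ≤ t, c.W i = c'.W i) ∧ ∀ i < t, c.h i = c'.h i := by
  obtain ⟨p0, hp0, hq0⟩ := hb
  have key : ∀ i, (i ≤ t → c.W i = c'.W i ∧
      ∃ p, isP p ∧ (c.W i).qs = [(ZQ.L, true), (p, true), (ZQ.R, true)]) ∧
      (i < t → c.h i = c'.h i) := by
    intro i
    induction i with
    | zero => exact ⟨fun _ => ⟨h0, p0, hp0, hq0⟩, fun _ => hr.trans hr'.symm⟩
    | succ i ih =>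
      have main1 : i + 1 ≤ t → c.W (i + 1) = c'.W (i + 1) ∧
          ∃ p, isP p ∧ (c.W (i + 1)).qs = [(ZQ.L, true), (p, true), (ZQ.R, true)] := by
        intro hle
        obtain ⟨hW, p, hp, hq⟩ := ih.1 (by omega)
        have hh : c.h i = c'.h i := ih.2 (by omega)
        have hsc : Step (ZM A) (zrule A (c.h i)) (c.W i) (c.W (i + 1)) :=
          c.steps i (by rw [hct]; omega)
        have hsc' : Step (ZM A) (zrule A (c.h i)) (c.W i) (c'.W (i + 1)) := by
          have := c'.steps i (by rw [hct']; omega)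
          rwa [← hW, ← hh] at this
        obtain ⟨p', u, v, x, y, x1, y1, hP', hq', -, -, -, -, -, -, -⟩ := extract hp hq hsc
        exact ⟨step_det hp hq hsc hsc', p', hP', hq'⟩
      refine ⟨main1, ?_⟩
      intro hlt
      obtain ⟨hW1, -⟩ := main1 (by omega)
      obtain ⟨hW, p, hp, hq⟩ := ih.1 (by omega)
      have hh : c.h i = c'.h i := ih.2 (by omega)
      have hsc : Step (ZM A) (zrule A (c.h i)) (c.W i) (c.W (i + 1)) :=
        c.steps i (by rw [hct]; omega)
      obtain ⟨p1, u, v, x, y, x1, y1, hP1, hq1, htW, htW1, hact, ex, ey, hyx, hyy⟩ :=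
        extract hp hq hsc
      obtain ⟨hrx, hry⟩ := tred_pair htW
      obtain ⟨hrx1, hry1⟩ := tred_pair htW1
      -- step i preserves length
      have hlen0 : x1.length + y1.length = x.length + y.length := by
        have h1 := hconst (i + 1) (by omega)
        have h2 := hconst i (by omega)
        rw [wlen_eq hq1 htW1] at h1
        rw [wlen_eq hq htW] at h2
        omega
      have shape0 := shape_of_step hp hact hrx hry hrx1 hry1 ex ey hyx hyy hlen0
      -- step i+1 of c
      have hsc1 : Step (ZM A) (zrule A (c.h (i + 1))) (c.W (i + 1)) (c.W (i + 2)) :=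
        c.steps (i + 1) (by rw [hct]; omega)
      obtain ⟨p2, u2, v2, x1a, y1a, x2, y2, hP2, hq2, htW1a, htW2, hact2, ex2, ey2, hyx2, hyy2⟩ :=
        extract hP1 hq1 hsc1
      obtain ⟨rfl, rfl⟩ : x1 = x1a ∧ y1 = y1a := by rw [htW1] at htW1a; simp_all
      obtain ⟨hrx2, hry2⟩ := tred_pair htW2
      have hlen1 : x2.length + y2.length = x1.length + y1.length := by
        have h1 := hconst (i + 2) (by omega)
        have h2 := hconst (i + 1) (by omega)
        rw [wlen_eq hq2 htW2] at h1
        rw [wlen_eq hq1 htW1] at h2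
        omega
      have shape1 := shape_of_step hP1 hact2 hrx1 hry1 hrx2 hry2 ex2 ey2 hyx2 hyy2 hlen1
      -- step i+1 of c'
      have hsc1' : Step (ZM A) (zrule A (c'.h (i + 1))) (c.W (i + 1)) (c'.W (i + 2)) := by
        have := c'.steps (i + 1) (by rw [hct']; omega)
        rwa [← hW1] at this
      obtain ⟨p2', u2', v2', x1b, y1b, x2', y2', hP2', hq2', htW1b, htW2', hact2', ex2', ey2',
        hyx2', hyy2'⟩ := extract hP1 hq1 hsc1'
      obtain ⟨rfl, rfl⟩ : x1 = x1b ∧ y1 = y1b := by rw [htW1] at htW1b; simp_all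
      obtain ⟨hrx2', hry2'⟩ := tred_pair htW2'
      have hlen1' : x2'.length + y2'.length = x1.length + y1.length := by
        have h1 := hconst' (i + 2) (by omega)
        have h2 := hconst' (i + 1) (by omega)
        rw [wlen_eq hq2' htW2'] at h1
        have hW1' : wlen (c'.W (i + 1)) = wlen (c.W (i + 1)) := by rw [hW1]
        rw [hW1', wlen_eq hq1 htW1] at h2
        omega
      have shape2 := shape_of_step hP1 hact2' hrx1 hry1 hrx2' hry2' ex2' ey2' hyx2' hyy2' hlen1'
      -- reducedness of the history
      have hred1 : c.h (i + 1) ≠ zinv A (c.h i) := c.red i (by rw [hct]; omega)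
      have hred2 : c'.h (i + 1) ≠ zinv A (c.h i) := by
        have := c'.red i (by rw [hct']; omega)
        rwa [← hh] at this
      exact cand_unique (shape_tgt shape0) (shape_src shape1) (shape_src shape2) hred1 hred2
  exact ⟨fun i hi => ((key i).1 hi).1, fun i hi => (key i).2 hi⟩


end SM
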